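/- Let p ∈ (0, 1/2) be a root of φ(p) = 2(1-uR)w·p² + (uw(R+1) - 2u - 2w)·p + u with u ∈ (0,1), w ∈ (0,1], R > 1. Set π_C(p) = Rp - 1 and π_D(p) = Rp. Then the pair (x_C, x_D) = (pN, (1-p)N) satisfies the equilibrium system p = [(1-u/2)·p·(1 + w·π_C(p)) + (u/2)·(1-p)·(1 + w·π_D(p))]·f_N and 1-p = [(u/2)·p·(1 + w·π_C(p)) + (1-u/2)·(1-p)·(1 + w·π_D(p))]·f_N if and only if f_N = 1/(1 + w(R-1)p). -/

import Mathlib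

open Set

/-- The fraction `p` solving the equilibrium polynomial yields a metastable
equilibrium `(pN, (1-p)N)` if and only if the baseline reproductive capacity
satisfies `f_N = 1 / (1 + w(R-1)p)`. -/
theorem equilibrium_iff_baseline_condition
    (u w R p fN : ℝ) (hu : u ∈ Set.Ioo (0 : ℝ) 1) (hw : w ∈ Set.Ioc (0 : ℝ) 1)
    (hR : 1 < R) (hp : p ∈ Set.Ioo (0 : ℝ) (1 / 2)) (hfN : 0 < fN)
    (hroot : 2 * (1 - u * R) * w * p ^ 2 +
        (u * w * (R + 1) - 2 * u - 2 * w) * p + u = 0)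
    (πC πD : ℝ → ℝ)
    (hπC : ∀ q, πC q = R * q - 1) (hπD : ∀ q, πD q = R * q) :
    ((p = ((1 - u / 2) * p * (1 + w * πC p) +
          (u / 2) * (1 - p) * (1 + w * πD p)) * fN ∧
      1 - p = ((u / 2) * p * (1 + w * πC p) +
          (1 - u / 2) * (1 - p) * (1 + w * πD p)) * fN)
      ↔ fN = 1 / (1 + w * (R - 1) * p)) := by
  obtain ⟨hp0, hp2⟩ := hp
  obtain ⟨hw0, hw1⟩ := hw
  have hD : 0 < 1 + w * (R - 1) * p := by
    nlinarith [mul_pos (mul_pos hw0 (sub_pos.2 hR)) hp0]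
  have hDne : (1 + w * (R - 1) * p) ≠ 0 := ne_of_gt hD
  rw [hπC, hπD]
  have hnum1 : (1 - u / 2) * p * (1 + w * (R * p - 1)) +
      (u / 2) * (1 - p) * (1 + w * (R * p)) = p * (1 + w * (R - 1) * p) := by
    linear_combination ((1:ℝ)/2) * hroot
  have hnum2 : (u / 2) * p * (1 + w * (R * p - 1)) +
      (1 - u / 2) * (1 - p) * (1 + w * (R * p)) = (1 - p) * (1 + w * (R - 1) * p) := by
    linear_combination (-(1:ℝ)/2) * hroot
  rw [hnum1, hnum2]
  constructor
  · rintro ⟨h1, -⟩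
    have h2 : p * 1 = p * ((1 + w * (R - 1) * p) * fN) := by
      rw [mul_one]; linarith [h1]
    have h3 := mul_left_cancel₀ (ne_of_gt hp0) h2
    field_simp
    linarith [h3]
  · intro hfn
    subst hfn
    constructor <;> rw [mul_assoc, mul_one_div_cancel hDne, mul_one]
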